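/- Let R, R3 > 0, θ > 0, α > 0, α3 ≥ 8α/θ, set H = αR and H3 = α3 R3, fix z = (z̃, z3) ∈ ℝ² × ℝ, and let c : ℝ² → ℝ be a measurable function satisfying θ|c(w̃)| ≤ 3α R3 whenever |w1 − z1| < H/2 and |w2 − z2| < H/2. Then ∫_{{(w̃, s) : |w1 − z1| < H/2, |w2 − z2| < H/2, |s − z3| ≥ H3/2}} exp(−|w̃ − z̃|²/(8R²) − (θ/R3)·|s − z3 + c(w̃)|) dw̃ ds ≤ (16 π R² R3/θ) · e^{−α}. -/

import Mathlib

open MeasureTheory Real Set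

lemma aux_integrable_exp_abs {k : ℝ} (hk : 0 < k) :
    Integrable (fun u : ℝ => Real.exp (-(k * |u|))) := by
  have hIoi : IntegrableOn (fun u : ℝ => Real.exp (-(k * |u|))) (Ioi 0) := by
    refine (exp_neg_integrableOn_Ioi 0 hk).congr_fun (fun x hx => ?_) measurableSet_Ioi
    simp only [abs_of_pos (show (0:ℝ) < x from hx), neg_mul]
  have hIic : IntegrableOn (fun u : ℝ => Real.exp (-(k * |u|))) (Iic 0) := by
    rw [← Measure.map_neg_eq_self (volume : Measure ℝ)]
    have m : MeasurableEmbedding fun x : ℝ => -x :=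
      (Homeomorph.neg ℝ).measurableEmbedding
    rw [m.integrableOn_map_iff]
    simp_rw [Function.comp_def, abs_neg, neg_preimage, neg_Iic, neg_zero]
    exact Iff.mpr integrableOn_Ici_iff_integrableOn_Ioi hIoi
  have := hIic.union hIoi
  rwa [Iic_union_Ioi, integrableOn_univ] at this

lemma aux_integral_exp_neg_mul_Ioi {k h : ℝ} (hk : 0 < k) :
    ∫ u in Ioi h, Real.exp (-(k * u)) = k⁻¹ * Real.exp (-(k * h)) := by
  have := integral_comp_mul_left_Ioi (fun x => Real.exp (-x)) h hk
  simp only [smul_eq_mul] at this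
  rw [this, integral_exp_neg_Ioi]

set_option maxHeartbeats 1000000 in
theorem stmt13 (R R3 θ α α3 H H3 : ℝ) (hR : 0 < R) (hR3 : 0 < R3) (hθ : 0 < θ)
    (hα : 0 < α) (hα3 : 8 * α / θ ≤ α3) (hH : H = α * R) (hH3 : H3 = α3 * R3)
    (z : ℝ × ℝ × ℝ) (c : ℝ × ℝ → ℝ) (hc : Measurable c)
    (hcb : ∀ w : ℝ × ℝ, |w.1 - z.1| < H / 2 → |w.2 - z.2.1| < H / 2 →
      θ * |c w| ≤ 3 * α * R3) :
    (∫ w in {w : ℝ × ℝ × ℝ |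
        |w.1 - z.1| < H / 2 ∧ |w.2.1 - z.2.1| < H / 2 ∧ H3 / 2 ≤ |w.2.2 - z.2.2|},
        Real.exp (-((w.1 - z.1) ^ 2 + (w.2.1 - z.2.1) ^ 2) / (8 * R ^ 2)
          - (θ / R3) * |w.2.2 - z.2.2 + c (w.1, w.2.1)|)) ≤
      16 * Real.pi * R ^ 2 * R3 / θ * Real.exp (-α) := by
  have hk : 0 < θ / R3 := div_pos hθ hR3
  have hα3pos : 0 < α3 := lt_of_lt_of_le (div_pos (by linarith) hθ) hα3
  have hh : 0 < H3 / 2 := by rw [hH3]; positivity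
  set k : ℝ := θ / R3 with hk_def
  set h : ℝ := H3 / 2 with hh_def
  set A : ℝ → ℝ := fun x => Real.exp (-(8 * R ^ 2)⁻¹ * x ^ 2) with hA_def
  set Cf : ℝ → ℝ := fun u =>
    Set.indicator {u : ℝ | h ≤ |u|} (fun u => Real.exp (3 * α) * Real.exp (-(k * |u|))) u
    with hCf_def
  set G : ℝ × ℝ × ℝ → ℝ := fun w =>
    A (w.1 - z.1) * (A (w.2.1 - z.2.1) * Cf (w.2.2 - z.2.2)) with hG_def
  have hSmeas : MeasurableSet {w : ℝ × ℝ × ℝ |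
      |w.1 - z.1| < H / 2 ∧ |w.2.1 - z.2.1| < H / 2 ∧ h ≤ |w.2.2 - z.2.2|} := by
    have h1 : Measurable fun w : ℝ × ℝ × ℝ => |w.1 - z.1| := by fun_prop
    have h2 : Measurable fun w : ℝ × ℝ × ℝ => |w.2.1 - z.2.1| := by fun_prop
    have h3 : Measurable fun w : ℝ × ℝ × ℝ => |w.2.2 - z.2.2| := by fun_prop
    exact (measurableSet_lt h1 measurable_const).inter
      ((measurableSet_lt h2 measurable_const).inter
        (measurableSet_le measurable_const h3))
  -- integrability
  have hb : (0 : ℝ) < (8 * R ^ 2)⁻¹ := by positivity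
  have hAint : Integrable A := integrable_exp_neg_mul_sq hb
  have hCint : Integrable Cf := by
    apply Integrable.indicator
    · exact (aux_integrable_exp_abs hk).const_mul _
    · exact measurableSet_le measurable_const (by fun_prop)
  have hA1 : Integrable (fun x : ℝ => A (x - z.1)) := hAint.comp_sub_right z.1
  have hA2 : Integrable (fun x : ℝ => A (x - z.2.1)) := hAint.comp_sub_right z.2.1
  have hC1 : Integrable (fun x : ℝ => Cf (x - z.2.2)) := hCint.comp_sub_right z.2.2
  have hvol : (volume : Measure (ℝ × ℝ × ℝ)) =
      (volume : Measure ℝ).prod ((volume : Measure ℝ).prod (volume : Measure ℝ)) := by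
    rw [← Measure.volume_eq_prod, ← Measure.volume_eq_prod]
  have hGint : Integrable G := by
    rw [hG_def, hvol]
    exact hA1.mul_prod (hA2.mul_prod hC1)
  set S : Set (ℝ × ℝ × ℝ) := {w : ℝ × ℝ × ℝ |
      |w.1 - z.1| < H / 2 ∧ |w.2.1 - z.2.1| < H / 2 ∧ h ≤ |w.2.2 - z.2.2|} with hS_def
  set f : ℝ × ℝ × ℝ → ℝ := fun w =>
    Real.exp (-((w.1 - z.1) ^ 2 + (w.2.1 - z.2.1) ^ 2) / (8 * R ^ 2)
      - k * |w.2.2 - z.2.2 + c (w.1, w.2.1)|) with hf_def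
  -- pointwise bound
  have hpt : ∀ w, S.indicator f w ≤ G w := by
    intro w
    by_cases hw : w ∈ S
    · rw [Set.indicator_of_mem hw]
      obtain ⟨hw1, hw2, hw3⟩ := hw
      have hCval : Cf (w.2.2 - z.2.2) =
          Real.exp (3 * α) * Real.exp (-(k * |w.2.2 - z.2.2|)) := by
        simp only [hCf_def]
        exact Set.indicator_of_mem (show (w.2.2 - z.2.2) ∈ {u : ℝ | h ≤ |u|} from hw3) _
      have hfeq : f w = A (w.1 - z.1) * (A (w.2.1 - z.2.1) *
          Real.exp (-(k * |w.2.2 - z.2.2 + c (w.1, w.2.1)|))) := by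
        simp only [hf_def, hA_def, ← Real.exp_add]
        congr 1
        ring
      rw [hfeq]
      simp only [hG_def]
      rw [hCval]
      have hccc := hcb (w.1, w.2.1) hw1 hw2
      have hexp : Real.exp (-(k * |w.2.2 - z.2.2 + c (w.1, w.2.1)|)) ≤
          Real.exp (3 * α) * Real.exp (-(k * |w.2.2 - z.2.2|)) := by
        rw [← Real.exp_add, Real.exp_le_exp]
        have habs : |w.2.2 - z.2.2| - |w.2.2 - z.2.2 + c (w.1, w.2.1)| ≤ |c (w.1, w.2.1)| := by
          have := abs_sub_abs_le_abs_sub (w.2.2 - z.2.2) (w.2.2 - z.2.2 + c (w.1, w.2.1))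
          have h0 : w.2.2 - z.2.2 - (w.2.2 - z.2.2 + c (w.1, w.2.1)) = -(c (w.1, w.2.1)) := by
            ring
          rwa [h0, abs_neg] at this
        have hkc : k * |c (w.1, w.2.1)| ≤ 3 * α := by
          rw [hk_def, div_mul_eq_mul_div, div_le_iff₀ hR3]
          exact hccc
        nlinarith [abs_nonneg (c (w.1, w.2.1)), mul_le_mul_of_nonneg_left habs hk.le]
      have hApos : (0 : ℝ) ≤ A (w.1 - z.1) := Real.exp_nonneg _
      have hApos2 : (0 : ℝ) ≤ A (w.2.1 - z.2.1) := Real.exp_nonneg _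
      gcongr
    · rw [Set.indicator_of_notMem hw]
      simp only [hG_def]
      have hC0 : 0 ≤ Cf (w.2.2 - z.2.2) :=
        Set.indicator_nonneg (fun u _ => by positivity) _
      have hApos : (0 : ℝ) ≤ A (w.1 - z.1) := Real.exp_nonneg _
      have hApos2 : (0 : ℝ) ≤ A (w.2.1 - z.2.1) := Real.exp_nonneg _
      positivity
  have hnn : ∀ w, 0 ≤ S.indicator f w :=
    fun w => Set.indicator_nonneg (fun u _ => Real.exp_nonneg _) _
  -- reduce to ∫ G
  have hgoal : (∫ w in S, f w) ≤ ∫ w, G w := by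
    rw [← integral_indicator hSmeas]
    exact integral_mono_of_nonneg (Filter.Eventually.of_forall hnn) hGint
      (Filter.Eventually.of_forall hpt)
  refine le_trans hgoal ?_
  -- compute ∫ G
  have hGval : ∫ w, G w = (∫ x, A (x - z.1)) * ((∫ x, A (x - z.2.1)) * ∫ x, Cf (x - z.2.2)) := by
    rw [hvol]
    have h1 : ∫ w : ℝ × ℝ × ℝ, G w
          ∂((volume : Measure ℝ).prod ((volume : Measure ℝ).prod volume)) =
        (∫ x, A (x - z.1)) * ∫ p : ℝ × ℝ, A (p.1 - z.2.1) * Cf (p.2 - z.2.2)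
          ∂((volume : Measure ℝ).prod volume) :=
      integral_prod_mul (fun x : ℝ => A (x - z.1))
        (fun p : ℝ × ℝ => A (p.1 - z.2.1) * Cf (p.2 - z.2.2))
    rw [h1]
    congr 1
    exact integral_prod_mul (fun x : ℝ => A (x - z.2.1)) (fun x : ℝ => Cf (x - z.2.2))
  have hAval : ∀ a : ℝ, (∫ x, A (x - a)) = Real.sqrt (π * (8 * R ^ 2)) := by
    intro a
    rw [integral_sub_right_eq_self A a]
    simp only [hA_def]
    rw [integral_gaussian]
    congr 1
    field_simp
  have hCval : (∫ x, Cf (x - z.2.2)) =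
      2 * (Real.exp (3 * α) * ((θ / R3)⁻¹ * Real.exp (-(k * h)))) := by
    rw [integral_sub_right_eq_self Cf z.2.2]
    have hCf2 : Cf = fun u => (Set.indicator (Ici h)
        (fun t => Real.exp (3 * α) * Real.exp (-(k * t)))) |u| := by
      funext u
      simp only [hCf_def]
      by_cases hu : h ≤ |u|
      · rw [Set.indicator_of_mem (show u ∈ {u : ℝ | h ≤ |u|} from hu),
          Set.indicator_of_mem (show |u| ∈ Ici h from hu)]
      · rw [Set.indicator_of_notMem (show u ∉ {u : ℝ | h ≤ |u|} from hu),
          Set.indicator_of_notMem (show |u| ∉ Ici h from hu)]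
    have hint : Ioi (0:ℝ) ∩ Ici h = Ici h :=
      Set.inter_eq_right.mpr (fun x hx => lt_of_lt_of_le hh hx)
    rw [hCf2, integral_comp_abs, setIntegral_indicator measurableSet_Ici, hint,
      integral_Ici_eq_integral_Ioi, integral_const_mul, aux_integral_exp_neg_mul_Ioi hk]
  rw [hGval, hAval, hAval, hCval]
  have hsq : Real.sqrt (π * (8 * R ^ 2)) * Real.sqrt (π * (8 * R ^ 2)) = π * (8 * R ^ 2) :=
    Real.mul_self_sqrt (by positivity)
  have hkh : k * h = θ * α3 / 2 := by
    rw [hk_def, hh_def, hH3]; field_simp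
  have hkh4 : 4 * α ≤ k * h := by
    rw [hkh]
    have h8 : 8 * α ≤ α3 * θ := (div_le_iff₀ hθ).mp hα3
    nlinarith
  have hexpb : Real.exp (3 * α) * Real.exp (-(k * h)) ≤ Real.exp (-α) := by
    rw [← Real.exp_add, Real.exp_le_exp]; linarith
  have hkinv : (θ / R3)⁻¹ = R3 / θ := inv_div θ R3
  calc Real.sqrt (π * (8 * R ^ 2)) * (Real.sqrt (π * (8 * R ^ 2)) *
        (2 * (Real.exp (3 * α) * ((θ / R3)⁻¹ * Real.exp (-(k * h))))))
      = (π * (8 * R ^ 2)) * 2 * (θ / R3)⁻¹ * (Real.exp (3 * α) * Real.exp (-(k * h))) := by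
        rw [← mul_assoc, hsq]; ring
    _ ≤ (π * (8 * R ^ 2)) * 2 * (θ / R3)⁻¹ * Real.exp (-α) := by
        have hpos : (0:ℝ) ≤ (π * (8 * R ^ 2)) * 2 * (θ / R3)⁻¹ := by positivity
        exact mul_le_mul_of_nonneg_left hexpb hpos
    _ = 16 * π * R ^ 2 * R3 / θ * Real.exp (-α) := by
        rw [hkinv]; ring
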